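/- arXiv:1302.7085 — 2 statements merged into one kernel-verified Lean document; each statement's English description precedes it below -/
import Mathlib

section
/- Let G be a spider graph with p ≥ 1 paths attached to the center, with N_e vertices at even positive level and N_o vertices at odd level. If N_e = N_o, then the differential chromatic number of G is at most N_o; if N_e < N_o, then the differential chromatic number of G is at most N_e + 1. In both cases DC(G) ≤ min(N_e + 1, N_o). -/
/-- A labeling of the vertices of a finite graph on `n` vertices: a one-to-one
assignment of the numbers `1, …, n` to the vertices. -/
def IsLabeling {V : Type*} [Fintype V] (c : V → ℕ) : Prop :=
  Function.Injective c ∧ ∀ v, c v ∈ Finset.Icc 1 (Fintype.card V)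

/-- The differential value of the labeling `c` is at least `d`: every edge has
label difference at least `d`. -/
def DiffValAtLeast {V : Type*} (G : SimpleGraph V) (c : V → ℕ) (d : ℕ) : Prop :=
  ∀ u v, G.Adj u v → d ≤ Nat.dist (c u) (c v)

/-- The differential chromatic number: the maximum, over all labelings, of the
minimum label difference over the edges. -/
noncomputable def diffChromNum {V : Type*} [Fintype V] (G : SimpleGraph V) : ℕ :=
  sSup {d : ℕ | ∃ c : V → ℕ, IsLabeling c ∧ DiffValAtLeast G c d}

/-- The spider graph with center `none` and `p` attached paths, the `i`-th path
having `ℓ i` vertices `some ⟨i, j⟩` (the vertex `some ⟨i, j⟩` is at level `j + 1`,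
i.e. at distance `j + 1` from the center). -/
def spider (p : ℕ) (ℓ : Fin p → ℕ) : SimpleGraph (Option (Σ i : Fin p, Fin (ℓ i))) :=
  SimpleGraph.fromRel (fun a b =>
    (a = none ∧ ∃ (i : Fin p) (h : 0 < ℓ i), b = some ⟨i, ⟨0, h⟩⟩) ∨
    (∃ (i : Fin p) (x y : Fin (ℓ i)), (x : ℕ) + 1 = (y : ℕ) ∧
      a = some ⟨i, x⟩ ∧ b = some ⟨i, y⟩))

/-- The number of vertices of the spider at even positive level (the vertex
`some ⟨i, j⟩` is at level `j + 1`). -/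
def spiderNe (p : ℕ) (ℓ : Fin p → ℕ) : ℕ :=
  (Finset.univ.filter (fun v : Σ i : Fin p, Fin (ℓ i) => (v.2 : ℕ) % 2 = 1)).card

/-- The number of vertices of the spider at odd level. -/
def spiderNo (p : ℕ) (ℓ : Fin p → ℕ) : ℕ :=
  (Finset.univ.filter (fun v : Σ i : Fin p, Fin (ℓ i) => (v.2 : ℕ) % 2 = 0)).card


section Aux
variable {p : ℕ} {ℓ : Fin p → ℕ}

lemma spider_adj_center (i : Fin p) (h : 0 < ℓ i) :
    (spider p ℓ).Adj none (some ⟨i, ⟨0, h⟩⟩) := by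
  rw [spider, SimpleGraph.fromRel_adj]
  exact ⟨by simp, Or.inl (Or.inl ⟨rfl, i, h, rfl⟩)⟩

lemma spider_adj_succ {i : Fin p} (x y : Fin (ℓ i)) (h : (x : ℕ) + 1 = y) :
    (spider p ℓ).Adj (some ⟨i, x⟩) (some ⟨i, y⟩) := by
  rw [spider, SimpleGraph.fromRel_adj]
  refine ⟨?_, Or.inl (Or.inr ⟨i, x, y, h, rfl, rfl⟩)⟩
  simp only [ne_eq, Option.some.injEq, Sigma.mk.inj_iff, heq_eq_eq, true_and]
  intro he
  have := congrArg Fin.val he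
  omega

lemma Ne_le_No : spiderNe p ℓ ≤ spiderNo p ℓ := by
  unfold spiderNe spiderNo
  apply Finset.card_le_card_of_injOn
    (fun v => ⟨v.1, ⟨v.2 - 1, lt_of_le_of_lt (Nat.sub_le _ _) v.2.isLt⟩⟩)
  · intro v hv
    simp only [Finset.mem_coe, Finset.mem_filter, Finset.mem_univ, true_and] at hv ⊢
    omega
  · rintro ⟨i, j⟩ hu ⟨i', j'⟩ hv h
    simp only [Finset.coe_filter, Set.mem_setOf_eq, Finset.mem_univ, true_and] at hu hv
    obtain rfl : i = i' := congrArg Sigma.fst h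
    simp only [Sigma.mk.inj_iff, heq_eq_eq, true_and, Fin.mk.injEq] at h ⊢
    exact Fin.ext (by omega)

lemma indep_card_le_No (S : Finset (Σ i : Fin p, Fin (ℓ i)))
    (hS : ∀ u ∈ S, ∀ v ∈ S, u.1 = v.1 → (u.2 : ℕ) + 1 ≠ (v.2 : ℕ)) :
    S.card ≤ spiderNo p ℓ := by
  unfold spiderNo
  apply Finset.card_le_card_of_injOn
    (fun v => ⟨v.1, ⟨v.2 - (v.2 : ℕ) % 2, lt_of_le_of_lt (Nat.sub_le _ _) v.2.isLt⟩⟩)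
  · intro v hv
    simp only [Finset.mem_coe, Finset.mem_filter, Finset.mem_univ, true_and]
    omega
  · rintro ⟨i, j⟩ hu ⟨i', j'⟩ hv h
    simp only [Finset.mem_coe] at hu hv
    obtain rfl : i = i' := congrArg Sigma.fst h
    simp only [Sigma.mk.inj_iff, heq_eq_eq, true_and, Fin.mk.injEq] at h ⊢
    refine Fin.ext ?_
    by_contra hne
    rcases (by omega : (j : ℕ) + 1 = (j' : ℕ) ∨ (j' : ℕ) + 1 = (j : ℕ)) with h1 | h1
    · exact hS ⟨i, j⟩ hu ⟨i, j'⟩ hv rfl h1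
    · exact hS ⟨i, j'⟩ hv ⟨i, j⟩ hu rfl h1

lemma indep_card_le_Ne (S : Finset (Σ i : Fin p, Fin (ℓ i)))
    (h0 : ∀ u ∈ S, (u.2 : ℕ) ≠ 0)
    (hS : ∀ u ∈ S, ∀ v ∈ S, u.1 = v.1 → (u.2 : ℕ) + 1 ≠ (v.2 : ℕ)) :
    S.card ≤ spiderNe p ℓ := by
  unfold spiderNe
  apply Finset.card_le_card_of_injOn
    (fun v => ⟨v.1, ⟨v.2 - (1 - (v.2 : ℕ) % 2), lt_of_le_of_lt (Nat.sub_le _ _) v.2.isLt⟩⟩)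
  · intro v hv
    have := h0 v hv
    simp only [Finset.mem_coe, Finset.mem_filter, Finset.mem_univ, true_and]
    omega
  · rintro ⟨i, j⟩ hu ⟨i', j'⟩ hv h
    simp only [Finset.mem_coe] at hu hv
    have hj0 := h0 ⟨i, j⟩ hu
    have hj0' := h0 ⟨i', j'⟩ hv
    obtain rfl : i = i' := congrArg Sigma.fst h
    simp only [Sigma.mk.inj_iff, heq_eq_eq, true_and, Fin.mk.injEq] at h ⊢
    simp only at hj0 hj0'
    refine Fin.ext ?_
    by_contra hne
    rcases (by omega : (j : ℕ) + 1 = (j' : ℕ) ∨ (j' : ℕ) + 1 = (j : ℕ)) with h1 | h1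
    · exact hS ⟨i, j⟩ hu ⟨i, j'⟩ hv rfl h1
    · exact hS ⟨i, j'⟩ hv ⟨i, j⟩ hu rfl h1

end Aux

/-- For a spider graph with `p ≥ 1` paths, `N_e` vertices at even positive level
and `N_o` vertices at odd level: if `N_e = N_o` then `DC(G) ≤ N_o`; if
`N_e < N_o` then `DC(G) ≤ N_e + 1`; in both cases `DC(G) ≤ min(N_e + 1, N_o)`. -/
theorem stmt_16 (p : ℕ) (hp : 1 ≤ p) (ℓ : Fin p → ℕ) (hℓ : ∀ i, 1 ≤ ℓ i) :
    (spiderNe p ℓ = spiderNo p ℓ → diffChromNum (spider p ℓ) ≤ spiderNo p ℓ) ∧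
    (spiderNe p ℓ < spiderNo p ℓ →
      diffChromNum (spider p ℓ) ≤ spiderNe p ℓ + 1) ∧
    diffChromNum (spider p ℓ) ≤ min (spiderNe p ℓ + 1) (spiderNo p ℓ) := by
  classical
  have hNeNo : spiderNe p ℓ ≤ spiderNo p ℓ := Ne_le_No
  have hmin : diffChromNum (spider p ℓ) ≤ min (spiderNe p ℓ + 1) (spiderNo p ℓ) := by
    apply csSup_le'
    rintro d ⟨c, hlab, hdiff⟩
    obtain ⟨hinj, hmem⟩ := hlab
    set n := Fintype.card (Option (Σ i : Fin p, Fin (ℓ i))) with hn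
    -- n = Ne + No + 1
    have hsplit : spiderNe p ℓ + spiderNo p ℓ = (Finset.univ : Finset (Σ i : Fin p, Fin (ℓ i))).card := by
      unfold spiderNe spiderNo
      have hh := Finset.card_filter_add_card_filter_not
        (s := (Finset.univ : Finset (Σ i : Fin p, Fin (ℓ i))))
        (p := fun v => (v.2 : ℕ) % 2 = 1)
      have hne : (Finset.univ.filter (fun a : Σ i : Fin p, Fin (ℓ i) => ¬ ((a.2 : ℕ) % 2 = 1)))
          = Finset.univ.filter (fun v : Σ i : Fin p, Fin (ℓ i) => (v.2 : ℕ) % 2 = 0) := by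
        apply Finset.filter_congr
        intro v _
        constructor <;> intro h <;> omega
      rw [hne] at hh
      omega
    have hcard : n = spiderNe p ℓ + spiderNo p ℓ + 1 := by
      rw [hn, Fintype.card_option, hsplit, Finset.card_univ]
    -- basic vertices
    set i0 : Fin p := ⟨0, hp⟩ with hi0
    set z0 : Fin (ℓ i0) := ⟨0, hℓ i0⟩ with hz0
    have hadj0 : (spider p ℓ).Adj none (some ⟨i0, z0⟩) := spider_adj_center i0 (hℓ i0)
    -- d + 1 ≤ n
    have hdn : d + 1 ≤ n := by
      have h1 := hdiff _ _ hadj0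
      have h2 := hmem none
      have h3 := hmem (some ⟨i0, z0⟩)
      simp only [Finset.mem_Icc, ← hn] at h2 h3
      simp only [Nat.dist] at h1
      omega
    -- image of c is exactly Icc 1 n
    have himg : Finset.image c Finset.univ = Finset.Icc 1 n := by
      apply Finset.eq_of_subset_of_card_le
      · intro m hm
        simp only [Finset.mem_image, Finset.mem_univ, true_and] at hm
        obtain ⟨v, rfl⟩ := hm
        exact hmem v
      · rw [Finset.card_image_of_injective _ hinj, Finset.card_univ, Nat.card_Icc, ← hn]
        omega
    -- window cardinality
    have hwin : ∀ a b : ℕ, 1 ≤ a → b ≤ n →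
        (Finset.univ.filter (fun v => c v ∈ Finset.Icc a b)).card = b + 1 - a := by
      intro a b ha hb
      have h1 : Finset.image c (Finset.univ.filter (fun v => c v ∈ Finset.Icc a b))
          = Finset.Icc a b := by
        apply Finset.Subset.antisymm
        · intro m hm
          simp only [Finset.mem_image, Finset.mem_filter, Finset.mem_univ, true_and] at hm
          obtain ⟨v, hv, rfl⟩ := hm
          exact hv
        · intro m hm
          have hm' : m ∈ Finset.Icc 1 n := by
            simp only [Finset.mem_Icc] at hm ⊢
            omega
          rw [← himg] at hm'
          simp only [Finset.mem_image, Finset.mem_univ, true_and] at hm'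
          obtain ⟨v, rfl⟩ := hm'
          simp only [Finset.mem_image, Finset.mem_filter, Finset.mem_univ, true_and]
          exact ⟨v, hm, rfl⟩
      have h2 := Finset.card_image_of_injective
        (Finset.univ.filter (fun v => c v ∈ Finset.Icc a b)) hinj
      rw [h1, Nat.card_Icc] at h2
      omega
    -- no adjacency inside a window of width < d
    have hnadj : ∀ a b : ℕ, b < a + d → ∀ u v, c u ∈ Finset.Icc a b → c v ∈ Finset.Icc a b →
        ¬ (spider p ℓ).Adj u v := by
      intro a b hab u v hu hv hadj
      have h1 := hdiff u v hadj
      simp only [Finset.mem_Icc] at hu hv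
      simp only [Nat.dist] at h1
      omega
    -- decomposition of option-filter cards
    have hdecomp : ∀ a b : ℕ,
        (Finset.univ.filter (fun v : Option (Σ i : Fin p, Fin (ℓ i)) => c v ∈ Finset.Icc a b)).card
        = (Finset.univ.filter (fun w : Σ i : Fin p, Fin (ℓ i) => c (some w) ∈ Finset.Icc a b)).card
          + (if c none ∈ Finset.Icc a b then 1 else 0) := by
      intro a b
      have hset : (Finset.univ.filter (fun v : Option (Σ i : Fin p, Fin (ℓ i)) => c v ∈ Finset.Icc a b))
          = ((Finset.univ.filter (fun w : Σ i : Fin p, Fin (ℓ i) => c (some w) ∈ Finset.Icc a b)).image some)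
            ∪ (if c none ∈ Finset.Icc a b then {none} else ∅) := by
        ext x
        cases x with
        | none =>
          split_ifs with hc
          · exact iff_of_true (Finset.mem_filter.mpr ⟨Finset.mem_univ _, hc⟩)
              (Finset.mem_union_right _ (by simp))
          · exact iff_of_false (fun h => hc (Finset.mem_filter.mp h).2)
              (fun h => by simp at h)
        | some w => split_ifs <;> simp
      rw [hset, Finset.card_union_of_disjoint, Finset.card_image_of_injective _ (Option.some_injective _)]
      · split_ifs <;> simp
      · split_ifs with hc
        · simp only [Finset.disjoint_singleton_right, Finset.mem_image]
          rintro ⟨w, -, hw⟩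
          exact Option.some_ne_none _ hw
        · exact Finset.disjoint_empty_right _
    -- key: d ≤ Ne + 1
    have hdNe : d ≤ spiderNe p ℓ + 1 := by
      rcases Nat.eq_zero_or_pos d with rfl | hd1
      · omega
      set m := c none with hm
      have hm1 : m ∈ Finset.Icc 1 n := hmem none
      simp only [Finset.mem_Icc] at hm1
      set t := min (m - 1) (n - d) with ht
      have hta : 1 ≤ t + 1 := by omega
      have htb : t + d ≤ n := by omega
      have hmab : m ∈ Finset.Icc (t + 1) (t + d) := by
        simp only [Finset.mem_Icc]
        omega
      have hScard := hwin (t + 1) (t + d) hta htb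
      have hdec := hdecomp (t + 1) (t + d)
      rw [if_pos hmab] at hdec
      set S' := Finset.univ.filter (fun w : Σ i : Fin p, Fin (ℓ i) =>
        c (some w) ∈ Finset.Icc (t + 1) (t + d)) with hS'
      have hS'card : S'.card = d - 1 := by omega
      have hle := indep_card_le_Ne S' ?_ ?_
      · omega
      · rintro ⟨i, j⟩ hu hj0
        simp only [hS', Finset.mem_filter, Finset.mem_univ, true_and] at hu
        have hjeq : j = ⟨0, hℓ i⟩ := Fin.ext hj0
        refine hnadj (t + 1) (t + d) (by omega) none (some ⟨i, j⟩) hmab hu ?_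
        rw [hjeq]
        exact spider_adj_center i (hℓ i)
      · rintro ⟨i, j⟩ hu ⟨i', j'⟩ hv h1 h2
        simp only [hS', Finset.mem_filter, Finset.mem_univ, true_and] at hu hv
        obtain rfl : i = i' := h1
        exact hnadj (t + 1) (t + d) (by omega) (some ⟨i, j⟩) (some ⟨i, j'⟩) hu hv
          (spider_adj_succ j j' h2)
    -- key: d ≤ No
    have hdNo : d ≤ spiderNo p ℓ := by
      by_contra hcon
      push_neg at hcon
      have hd : d = spiderNo p ℓ + 1 := by omega
      have hn2 : n = 2 * d - 1 := by omega
      have hd1 : 1 ≤ d := by omega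
      -- c none must be in both windows [1,d] and [d,n]
      have hmem1 : c none ∈ Finset.Icc 1 d := by
        by_contra hc1
        have hdec := hdecomp 1 d
        rw [if_neg hc1] at hdec
        have hw1 := hwin 1 d (le_refl _) (by omega)
        set S' := Finset.univ.filter (fun w : Σ i : Fin p, Fin (ℓ i) =>
          c (some w) ∈ Finset.Icc 1 d) with hS'
        have hle := indep_card_le_No S' ?_
        · omega
        · rintro ⟨i, j⟩ hu ⟨i', j'⟩ hv h1 h2
          simp only [hS', Finset.mem_filter, Finset.mem_univ, true_and] at hu hv
          obtain rfl : i = i' := h1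
          exact hnadj 1 d (by omega) (some ⟨i, j⟩) (some ⟨i, j'⟩) hu hv
            (spider_adj_succ j j' h2)
      have hmem2 : c none ∈ Finset.Icc d n := by
        by_contra hc1
        have hdec := hdecomp d n
        rw [if_neg hc1] at hdec
        have hw1 := hwin d n hd1 (le_refl _)
        set S' := Finset.univ.filter (fun w : Σ i : Fin p, Fin (ℓ i) =>
          c (some w) ∈ Finset.Icc d n) with hS'
        have hle := indep_card_le_No S' ?_
        · omega
        · rintro ⟨i, j⟩ hu ⟨i', j'⟩ hv h1 h2
          simp only [hS', Finset.mem_filter, Finset.mem_univ, true_and] at hu hv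
          obtain rfl : i = i' := h1
          exact hnadj d n (by omega) (some ⟨i, j⟩) (some ⟨i, j'⟩) hu hv
            (spider_adj_succ j j' h2)
      -- so c none = d, but its neighbor is within distance d - 1
      simp only [Finset.mem_Icc] at hmem1 hmem2
      have h1 := hdiff _ _ hadj0
      have h3 := hmem (some ⟨i0, z0⟩)
      simp only [Finset.mem_Icc, ← hn] at h3
      simp only [Nat.dist] at h1
      omega
    omega
  exact ⟨fun _ => hmin.trans (min_le_right _ _), fun _ => hmin.trans (min_le_left _ _), hmin⟩
end

section
/- Let G be a regular caterpillar with an odd number s = 2k+1 of spine vertices, each with Δ ≥ 1 legs, so n = (2k+1)(Δ+1), and let c be a labeling of G whose differential value is at least ⌈(n−Δ)/2⌉ + 1. Then no two adjacent spine vertices both receive labels in the interval [1, ⌈(n−Δ)/2⌉ − 1], and no two adjacent spine vertices both receive labels in the interval [⌈(n+Δ)/2⌉ + 1, n]. -/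
/-- The regular caterpillar with spine vertices `(i, 0)` for `i : Fin s` forming a
path, each spine vertex `(i, 0)` adjacent to its `Δ` legs `(i, j)`, `j ≠ 0`. -/
def regularCaterpillar (s Δ : ℕ) : SimpleGraph (Fin s × Fin (Δ + 1)) :=
  SimpleGraph.fromRel (fun a b =>
    (a.2 = 0 ∧ b.2 = 0 ∧ (a.1 : ℕ) + 1 = (b.1 : ℕ)) ∨
    (a.1 = b.1 ∧ a.2 = 0 ∧ b.2 ≠ 0))

/-- For a regular caterpillar with `s = 2k+1` spine vertices and `Δ ≥ 1` legs per
spine vertex (`n = (2k+1)(Δ+1)`), for any labeling of differential value at least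
`⌈(n−Δ)/2⌉ + 1`: no two adjacent spine vertices both get labels in
`[1, ⌈(n−Δ)/2⌉ − 1]`, and no two adjacent spine vertices both get labels in
`[⌈(n+Δ)/2⌉ + 1, n]`. -/
theorem stmt_17 (k Δ : ℕ) (hΔ : 1 ≤ Δ)
    (c : Fin (2 * k + 1) × Fin (Δ + 1) → ℕ) (hc : IsLabeling c)
    (hd : DiffValAtLeast (regularCaterpillar (2 * k + 1) Δ) c
      (((2 * k + 1) * (Δ + 1) - Δ + 1) / 2 + 1)) :
    ∀ u v, (regularCaterpillar (2 * k + 1) Δ).Adj u v →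
      u.2 = 0 → v.2 = 0 →
      (¬(c u ∈ Finset.Icc 1 (((2 * k + 1) * (Δ + 1) - Δ + 1) / 2 - 1) ∧
         c v ∈ Finset.Icc 1 (((2 * k + 1) * (Δ + 1) - Δ + 1) / 2 - 1)) ∧
       ¬(c u ∈ Finset.Icc (((2 * k + 1) * (Δ + 1) + Δ + 1) / 2 + 1)
            ((2 * k + 1) * (Δ + 1)) ∧
         c v ∈ Finset.Icc (((2 * k + 1) * (Δ + 1) + Δ + 1) / 2 + 1)
            ((2 * k + 1) * (Δ + 1)))) := by
  intro u v hadj hu hv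
  have hdist := hd u v hadj
  have hn : (2 * k + 1) * (Δ + 1) = 2 * (k * Δ) + 2 * k + Δ + 1 := by ring
  simp only [Nat.dist, Finset.mem_Icc] at hdist ⊢
  omega
end
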